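/- Let M be a block matrix partitioned by F and C with M_{F,F} = D - A, where D is the block-diagonal part and D invertible. Define M₂ = (1/2)·[[D - A D⁻¹ A, M_{F,C} + A D⁻¹ M_{F,C}], [M_{C,F} + M_{C,F} D⁻¹ A, 2 M_{C,C} - M_{C,F} D⁻¹ M_{F,C}]]. Then Schur(M₂, F) = Schur(M, F), i.e., the Schur complements onto C agree, provided D - A and D - A D⁻¹ A are invertible. -/

import Mathlib

open Matrix

/-- The squaring transformation preserves Schur complements: with `M_FF = D - A`,
the matrix `M₂` built from one squaring step has the same Schur complement onto `C`
as the original matrix. -/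
theorem stmt_14 {F C : Type*} [Fintype F] [DecidableEq F] [Fintype C] [DecidableEq C]
    (D A : Matrix F F ℂ) (MFC : Matrix F C ℂ) (MCF : Matrix C F ℂ) (MCC : Matrix C C ℂ)
    (hD : IsUnit D) (hDA : IsUnit (D - A)) (hDADA : IsUnit (D - A * D⁻¹ * A)) :
    (MCC - (1 / 2 : ℂ) • (MCF * D⁻¹ * MFC)) -
        ((1 / 2 : ℂ) • (MCF + MCF * D⁻¹ * A)) *
          ((1 / 2 : ℂ) • (D - A * D⁻¹ * A))⁻¹ *
          ((1 / 2 : ℂ) • (MFC + A * D⁻¹ * MFC)) =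
      MCC - MCF * (D - A)⁻¹ * MFC := by
  set S : Matrix F F ℂ := D - A * D⁻¹ * A with hS
  have hDdet : IsUnit D.det := (isUnit_iff_isUnit_det D).mp hD
  have hDAdet : IsUnit (D - A).det := (isUnit_iff_isUnit_det _).mp hDA
  have hSdet : IsUnit S.det := (isUnit_iff_isUnit_det _).mp hDADA
  have hDinv : D⁻¹ * D = 1 := nonsing_inv_mul D hDdet
  have hDinv' : D * D⁻¹ = 1 := mul_nonsing_inv D hDdet
  have hDAinv : (D - A)⁻¹ * (D - A) = 1 := nonsing_inv_mul _ hDAdet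
  have hSinv : S * S⁻¹ = 1 := mul_nonsing_inv _ hSdet
  -- factorization : (D - A) * (1 + D⁻¹ * A) = S
  have hfac : (D - A) * (1 + D⁻¹ * A) = S := by
    rw [hS]
    have : (D - A) * (1 + D⁻¹ * A)
        = D + D * (D⁻¹ * A) - A - A * D⁻¹ * A := by noncomm_ring
    rw [this, ← mul_assoc, hDinv', one_mul]
    abel
  -- key identity
  have key : (1 + D⁻¹ * A) * S⁻¹ * (1 + A * D⁻¹) = (2 : ℂ) • (D - A)⁻¹ - D⁻¹ := by
    have h1 : (D - A) * ((1 + D⁻¹ * A) * S⁻¹ * (1 + A * D⁻¹)) = 1 + A * D⁻¹ := by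
      rw [← mul_assoc, ← mul_assoc, hfac, hSinv, one_mul]
    have h2 : (D - A) * ((2 : ℂ) • (D - A)⁻¹ - D⁻¹) = 1 + A * D⁻¹ := by
      rw [mul_sub, mul_smul_comm, mul_nonsing_inv _ hDAdet, sub_mul, hDinv']
      simp [two_smul]
      try abel
    calc (1 + D⁻¹ * A) * S⁻¹ * (1 + A * D⁻¹)
        = (D - A)⁻¹ * ((D - A) * ((1 + D⁻¹ * A) * S⁻¹ * (1 + A * D⁻¹))) := by
          rw [← mul_assoc, hDAinv, one_mul]
      _ = (D - A)⁻¹ * ((D - A) * ((2 : ℂ) • (D - A)⁻¹ - D⁻¹)) := by rw [h1, h2]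
      _ = (2 : ℂ) • (D - A)⁻¹ - D⁻¹ := by rw [← mul_assoc, hDAinv, one_mul]
  -- compute the scaled inverse
  haveI : Invertible ((1 / 2 : ℂ)) := invertibleOfNonzero (by norm_num)
  have hsmulinv : ((1 / 2 : ℂ) • S)⁻¹ = (2 : ℂ) • S⁻¹ := by
    rw [Matrix.inv_smul _ _ hSdet]
    congr 1
    exact invOf_eq_right_inv (by norm_num)
  rw [hsmulinv]
  -- rewrite the product term
  have hprod : ((1 / 2 : ℂ) • (MCF + MCF * D⁻¹ * A)) * ((2 : ℂ) • S⁻¹) *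
      ((1 / 2 : ℂ) • (MFC + A * D⁻¹ * MFC))
      = (1 / 2 : ℂ) • (MCF * ((1 + D⁻¹ * A) * S⁻¹ * (1 + A * D⁻¹)) * MFC) := by
    simp only [Matrix.smul_mul, Matrix.mul_smul, smul_smul]
    norm_num
    simp only [Matrix.mul_add, Matrix.add_mul, Matrix.mul_assoc, Matrix.mul_one,
      Matrix.one_mul]
  rw [hprod, key]
  have : MCF * ((2 : ℂ) • (D - A)⁻¹ - D⁻¹) * MFC
      = (2 : ℂ) • (MCF * (D - A)⁻¹ * MFC) - MCF * D⁻¹ * MFC := by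
    simp [Matrix.mul_sub, Matrix.sub_mul, Matrix.mul_smul, Matrix.smul_mul, Matrix.mul_assoc]
  rw [this, smul_sub, smul_smul]
  norm_num
  try abel
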